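/- Let q = pⁿ be an odd prime power, K a finite field with q² elements, F its subfield of order q, and d a positive integer such that f(x) = x^d is a planar function on K. For c ∈ K \ {0} and a field automorphism σ of K, let γ_{c,σ} be the map sending the affine point (x,y) to (σ(cx), σ(c^d y)). Then: (i) γ_{c,σ} maps each affine line L_{a,b} = {(x, (x+a)^d − b) : x ∈ K} onto the line L_{σ(ca), σ(c^d b)}, so γ_{c,σ} extends to a collineation of Π(x^d) fixing (∞), and these collineations form a group under composition; (ii) for any θ, θ′ ∈ K \ {0} such that θ^{q+1} and θ′^{q+1} are both nonsquares in F, there exist c ∈ K \ {0} and a field automorphism σ of K such that γ_{c,σ} maps {(x, tθ) : x ∈ K, t ∈ F} onto {(x, tθ′) : x ∈ K, t ∈ F}; hence all the unitals U_θ with θ^{q+1} a nonsquare in F are equivalent in Π(x^d). -/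

import Mathlib

/-- The point set of the shift plane `Π(f)`: affine points `(x,y)`, points at
infinity `(a)` for `a ∈ K`, and the point `(∞)`. -/
abbrev ShiftPt (K : Type) : Type := (K × K) ⊕ (K ⊕ Unit)

/-- The affine line `L_{a,b} = {(x, f(x+a) − b) : x ∈ K} ∪ {(a)}` of the shift plane. -/
def affLine (K : Type) [Field K] (f : K → K) (a b : K) : Set (ShiftPt K) :=
  {P | (∃ x : K, P = Sum.inl (x, f (x + a) - b)) ∨ P = Sum.inr (Sum.inl a)}

/-- The vertical line `N_a = {(a,y) : y ∈ K} ∪ {(∞)}` of the shift plane. -/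
def vertLine (K : Type) [Field K] (a : K) : Set (ShiftPt K) :=
  {P | (∃ y : K, P = Sum.inl (a, y)) ∨ P = Sum.inr (Sum.inr ())}

/-- The line at infinity of the shift plane. -/
def lineAtInf (K : Type) : Set (ShiftPt K) :=
  {P | ∃ s : K ⊕ Unit, P = Sum.inr s}

/-- The set of all lines of the shift plane `Π(f)`. -/
def shiftLines (K : Type) [Field K] (f : K → K) : Set (Set (ShiftPt K)) :=
  {L | (∃ a b : K, L = affLine K f a b) ∨ (∃ a : K, L = vertLine K a) ∨ L = lineAtInf K}

/-- The set `θF = {tθ : t ∈ F}`, where `F = {t : t^q = t}` is the subfield of order `q`. -/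
def scalarSet (K : Type) [Field K] (q : ℕ) (θ : K) : Set K :=
  {c | ∃ t : K, t ^ q = t ∧ c = t * θ}

/-- The point set `U_θ = {(x, tθ) : x ∈ K, t ∈ F} ∪ {(∞)}`. -/
def unitalSet (K : Type) [Field K] (q : ℕ) (θ : K) : Set (ShiftPt K) :=
  {P | (∃ x t : K, t ^ q = t ∧ P = Sum.inl (x, t * θ)) ∨ P = Sum.inr (Sum.inr ())}

/-- The map `γ_{c,σ} : (x,y) ↦ (σ(cx), σ(c^d y))`, `(a) ↦ (σ(ca))`, `(∞) ↦ (∞)`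
on the points of the shift plane `Π(x^d)`. -/
def gammaMap (K : Type) [Field K] (d : ℕ) (c : K) (σ : K ≃+* K) : ShiftPt K → ShiftPt K
  | Sum.inl (x, y) => Sum.inl (σ (c * x), σ (c ^ d * y))
  | Sum.inr (Sum.inl a) => Sum.inr (Sum.inl (σ (c * a)))
  | Sum.inr (Sum.inr _) => Sum.inr (Sum.inr ())

section Lemmas
variable {K : Type} [Field K]

lemma gamma_key (d : ℕ) (c : K) (σ : K ≃+* K) (a b x : K) :
    σ (c ^ d * ((x + a) ^ d - b)) = (σ (c * x) + σ (c * a)) ^ d - σ (c ^ d * b) := by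
  calc σ (c ^ d * ((x + a) ^ d - b))
      = σ ((c * (x + a)) ^ d - c ^ d * b) := by
        rw [show c ^ d * ((x + a) ^ d - b) = (c * (x + a)) ^ d - c ^ d * b from by
          rw [mul_pow]; ring]
    _ = σ ((c * (x + a)) ^ d) - σ (c ^ d * b) := map_sub σ _ _
    _ = (σ (c * (x + a))) ^ d - σ (c ^ d * b) := by rw [map_pow]
    _ = (σ (c * x) + σ (c * a)) ^ d - σ (c ^ d * b) := by rw [← map_add, mul_add]

lemma gamma_affLine (d : ℕ) (c : K) (hc : c ≠ 0) (σ : K ≃+* K) (a b : K) :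
    gammaMap K d c σ '' affLine K (fun x : K => x ^ d) a b
      = affLine K (fun x : K => x ^ d) (σ (c * a)) (σ (c ^ d * b)) := by
  ext P
  simp only [affLine, Set.mem_image, Set.mem_setOf_eq]
  constructor
  · rintro ⟨Q, hQ, rfl⟩
    rcases hQ with ⟨x, rfl⟩ | rfl
    · refine Or.inl ⟨σ (c * x), ?_⟩
      simp only [gammaMap]
      rw [gamma_key]
    · exact Or.inr (by simp [gammaMap])
  · rintro (⟨x', rfl⟩ | rfl)
    · refine ⟨Sum.inl (c⁻¹ * σ.symm x', ((c⁻¹ * σ.symm x') + a) ^ d - b), Or.inl ⟨_, rfl⟩, ?_⟩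
      have hx : σ (c * (c⁻¹ * σ.symm x')) = x' := by
        rw [mul_inv_cancel_left₀ hc, RingEquiv.apply_symm_apply]
      simp only [gammaMap]
      rw [gamma_key, hx]
    · exact ⟨Sum.inr (Sum.inl a), Or.inr rfl, rfl⟩

lemma gamma_vertLine (d : ℕ) (c : K) (hc : c ≠ 0) (σ : K ≃+* K) (a : K) :
    gammaMap K d c σ '' vertLine K a = vertLine K (σ (c * a)) := by
  have hcd : c ^ d ≠ 0 := pow_ne_zero _ hc
  ext P
  simp only [vertLine, Set.mem_image, Set.mem_setOf_eq]
  constructor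
  · rintro ⟨Q, hQ, rfl⟩
    rcases hQ with ⟨y, rfl⟩ | rfl
    · exact Or.inl ⟨σ (c ^ d * y), rfl⟩
    · exact Or.inr rfl
  · rintro (⟨y, rfl⟩ | rfl)
    · refine ⟨Sum.inl (a, (c ^ d)⁻¹ * σ.symm y), Or.inl ⟨_, rfl⟩, ?_⟩
      simp only [gammaMap]
      rw [mul_inv_cancel_left₀ hcd, RingEquiv.apply_symm_apply]
    · exact ⟨Sum.inr (Sum.inr ()), Or.inr rfl, rfl⟩

lemma gamma_lineAtInf (d : ℕ) (c : K) (hc : c ≠ 0) (σ : K ≃+* K) :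
    gammaMap K d c σ '' lineAtInf K = lineAtInf K := by
  ext P
  simp only [lineAtInf, Set.mem_image, Set.mem_setOf_eq]
  constructor
  · rintro ⟨Q, ⟨s, rfl⟩, rfl⟩
    rcases s with a | u
    · exact ⟨Sum.inl (σ (c * a)), rfl⟩
    · exact ⟨Sum.inr (), rfl⟩
  · rintro ⟨s, rfl⟩
    rcases s with a | u
    · refine ⟨Sum.inr (Sum.inl (c⁻¹ * σ.symm a)), ⟨Sum.inl _, rfl⟩, ?_⟩
      simp only [gammaMap]
      rw [mul_inv_cancel_left₀ hc, RingEquiv.apply_symm_apply]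
    · cases u
      exact ⟨Sum.inr (Sum.inr ()), ⟨Sum.inr (), rfl⟩, rfl⟩

lemma gamma_comp (d : ℕ) (c c' : K) (σ σ' : K ≃+* K) :
    gammaMap K d c σ ∘ gammaMap K d c' σ'
      = gammaMap K d (σ'.symm c * c') (σ'.trans σ) := by
  have e1 : ∀ x : K, c * σ' (c' * x) = σ' (σ'.symm c * c' * x) := by
    intro x; simp [map_mul, RingEquiv.apply_symm_apply, mul_assoc]
  have e2 : ∀ y : K, c ^ d * σ' (c' ^ d * y) = σ' ((σ'.symm c * c') ^ d * y) := by
    intro y; simp [mul_pow, map_mul, map_pow, RingEquiv.apply_symm_apply, mul_assoc]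
  funext P
  rcases P with ⟨x, y⟩ | a | u
  · simp only [Function.comp_apply, gammaMap, RingEquiv.coe_trans]
    rw [← e1, ← e2]
  · simp only [Function.comp_apply, gammaMap, RingEquiv.coe_trans]
    rw [← e1]
  · rfl

lemma gamma_one (d : ℕ) : gammaMap K d 1 (RingEquiv.refl K) = id := by
  funext P
  rcases P with ⟨x, y⟩ | a | u
  · simp [gammaMap]
  · simp [gammaMap]
  · simp [gammaMap]

lemma gamma_bij (d : ℕ) (c : K) (hc : c ≠ 0) (σ : K ≃+* K) :
    Function.Bijective (gammaMap K d c σ) := by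
  rw [Function.bijective_iff_has_inverse]
  refine ⟨gammaMap K d (σ c⁻¹) σ.symm, ?_, ?_⟩
  · have h : gammaMap K d (σ c⁻¹) σ.symm ∘ gammaMap K d c σ = id := by
      rw [gamma_comp, RingEquiv.symm_apply_apply, inv_mul_cancel₀ hc,
        RingEquiv.self_trans_symm, gamma_one]
    intro P; exact congrFun h P
  · have h : gammaMap K d c σ ∘ gammaMap K d (σ c⁻¹) σ.symm = id := by
      rw [gamma_comp, RingEquiv.symm_symm, ← map_mul, mul_inv_cancel₀ hc, map_one,
        RingEquiv.symm_trans_self, gamma_one]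
    intro P; exact congrFun h P

lemma gamma_unital (d q : ℕ) (c θ : K) (hc : c ≠ 0) :
    gammaMap K d c (RingEquiv.refl K) '' unitalSet K q θ = unitalSet K q (c ^ d * θ) := by
  ext P
  simp only [unitalSet, Set.mem_image, Set.mem_setOf_eq]
  constructor
  · rintro ⟨Q, hQ, rfl⟩
    rcases hQ with ⟨x, t, ht, rfl⟩ | rfl
    · refine Or.inl ⟨c * x, t, ht, ?_⟩
      simp only [gammaMap, RingEquiv.refl_apply, Sum.inl.injEq, Prod.mk.injEq]
      exact ⟨trivial, by ring⟩
    · exact Or.inr rfl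
  · rintro (⟨x, t, ht, rfl⟩ | rfl)
    · refine ⟨Sum.inl (c⁻¹ * x, t * θ), Or.inl ⟨c⁻¹ * x, t, ht, rfl⟩, ?_⟩
      simp only [gammaMap, RingEquiv.refl_apply, Sum.inl.injEq, Prod.mk.injEq]
      exact ⟨mul_inv_cancel_left₀ hc x, by ring⟩
    · exact ⟨Sum.inr (Sum.inr ()), Or.inr rfl, rfl⟩

end Lemmas

section NT
variable {K : Type} [Field K] [Fintype K]

lemma planar_gcd_two (d : ℕ) (hd : 0 < d)
    (hodd : Odd (Fintype.card K)) (h3 : 3 ≤ Fintype.card K)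
    (hplanar : ∀ a : K, a ≠ 0 → Function.Bijective (fun x : K => (x + a) ^ d - x ^ d)) :
    Nat.gcd d (Fintype.card K - 1) = 2 := by
  set N := Fintype.card K - 1 with hN
  have hNpos : 0 < N := by omega
  have hinj : Function.Injective (fun x : K => (x + 1) ^ d - x ^ d) :=
    (hplanar 1 one_ne_zero).1
  have hde : 2 ∣ d := by
    rcases Nat.even_or_odd d with he | ho
    · exact he.two_dvd
    · exfalso
      have h10 : (-1 : K) = 0 :=
        hinj (a₁ := -1) (a₂ := 0) (by norm_num [zero_pow hd.ne', ho.neg_one_pow])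
      exact one_ne_zero (neg_eq_zero.mp h10)
  have hNe : 2 ∣ N := (Nat.Odd.sub_odd hodd odd_one).two_dvd
  have hgle : Nat.gcd d N ≤ 2 := by
    by_contra hlt
    push_neg at hlt
    obtain ⟨g₀, hg₀⟩ := IsCyclic.exists_generator (α := Kˣ)
    have hord : orderOf g₀ = N := by
      rw [orderOf_eq_card_of_forall_mem_zpowers hg₀, Nat.card_units, Nat.card_eq_fintype_card]
    have hgd : Nat.gcd d N ∣ d := Nat.gcd_dvd_left _ _
    have hgN : Nat.gcd d N ∣ N := Nat.gcd_dvd_right _ _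
    have hmG : N / Nat.gcd d N * Nat.gcd d N = N := Nat.div_mul_cancel hgN
    set G := Nat.gcd d N with hGdef
    set m := N / G with hm
    have hmpos : 0 < m := Nat.div_pos (Nat.le_of_dvd hNpos hgN) (by omega)
    have hpow : ∀ k, g₀ ^ k = 1 ↔ N ∣ k := by
      intro k
      rw [← hord]
      exact ⟨fun h => orderOf_dvd_of_pow_eq_one h, fun h => orderOf_dvd_iff_pow_eq_one.mp h⟩
    set w := g₀ ^ m with hwdef
    have hw1 : w ≠ 1 := by
      intro h
      have hdvd := (hpow m).mp h
      have hle := Nat.le_of_dvd hmpos hdvd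
      have hmlt : m < N := by
        calc m = m * 1 := (mul_one m).symm
          _ < m * G := by exact (Nat.mul_lt_mul_left hmpos).mpr (by omega)
          _ = N := hmG
      omega
    have hw2 : w ^ 2 ≠ 1 := by
      intro h
      rw [hwdef, ← pow_mul] at h
      have hdvd := (hpow (m * 2)).mp h
      have hle := Nat.le_of_dvd (by omega) hdvd
      have hmlt : m * 2 < N := by
        calc m * 2 < m * G := (Nat.mul_lt_mul_left hmpos).mpr hlt
          _ = N := hmG
      omega
    have hwd : w ^ d = 1 := by
      rw [hwdef, ← pow_mul]
      obtain ⟨e, he⟩ := hgd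
      exact (hpow (m * d)).mpr ⟨e, by rw [he, ← hmG]; ring⟩
    set W : K := (w : K) with hW
    have hWd : W ^ d = 1 := by rw [hW, ← Units.val_pow_eq_pow_val, hwd, Units.val_one]
    have hW1 : W ≠ 1 := fun h => hw1 (Units.ext (by rw [Units.val_one]; exact h))
    have hW2 : W ^ 2 ≠ 1 := fun h =>
      hw2 (Units.ext (by rw [Units.val_pow_eq_pow_val, Units.val_one]; exact h))
    have hW0 : W ≠ 0 := Units.ne_zero w
    have hs1 : W - 1 ≠ 0 := sub_ne_zero.mpr hW1
    have hs2 : W ^ 2 - 1 ≠ 0 := sub_ne_zero.mpr hW2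
    have k1 : (W - 1)⁻¹ + 1 = W * (W - 1)⁻¹ := by field_simp; ring
    have k2 : (W ^ 2 - 1)⁻¹ + 1 = W ^ 2 * (W ^ 2 - 1)⁻¹ := by field_simp; ring
    have D1 : ((W - 1)⁻¹ + 1) ^ d - ((W - 1)⁻¹) ^ d = 0 := by
      rw [k1, mul_pow, hWd, one_mul, sub_self]
    have D2 : ((W ^ 2 - 1)⁻¹ + 1) ^ d - ((W ^ 2 - 1)⁻¹) ^ d = 0 := by
      rw [k2, mul_pow, ← pow_mul, mul_comm 2 d, pow_mul, hWd, one_pow, one_mul, sub_self]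
    have hx : (W - 1)⁻¹ = (W ^ 2 - 1)⁻¹ :=
      hinj (a₁ := (W - 1)⁻¹) (a₂ := (W ^ 2 - 1)⁻¹) (by
        show ((W - 1)⁻¹ + 1) ^ d - ((W - 1)⁻¹) ^ d
            = ((W ^ 2 - 1)⁻¹ + 1) ^ d - ((W ^ 2 - 1)⁻¹) ^ d
        rw [D1, D2])
    have hWW : W - 1 = W ^ 2 - 1 := inv_inj.mp hx
    have hsq : W * W = W * 1 := by rw [mul_one]; linear_combination -hWW
    exact hW1 (mul_left_cancel₀ hW0 hsq)
  have hgpos : 0 < Nat.gcd d N := Nat.gcd_pos_of_pos_left _ hd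
  have h2g : 2 ∣ Nat.gcd d N := Nat.dvd_gcd hde hNe
  omega

lemma sq_is_dpow (d : ℕ)
    (hg : Nat.gcd d (Fintype.card K - 1) = 2) (s : K) (hs : s ≠ 0) :
    ∃ c : K, c ≠ 0 ∧ c ^ d = s * s := by
  set N := Fintype.card K - 1 with hN
  have hbez : (2 : ℤ) = d * Nat.gcdA d N + N * Nat.gcdB d N := by
    have h := Nat.gcd_eq_gcd_ab d N
    rw [hg] at h
    exact_mod_cast h
  set su : Kˣ := Units.mk0 s hs with hsu
  have hsN : su ^ (N : ℤ) = 1 := by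
    rw [zpow_natCast]
    have h : su ^ Nat.card Kˣ = 1 := pow_card_eq_one'
    rwa [Nat.card_units, Nat.card_eq_fintype_card] at h
  have key : su ^ (2 : ℤ) = (su ^ Nat.gcdA d N) ^ (d : ℤ) := by
    rw [← zpow_mul]
    calc su ^ (2 : ℤ) = su ^ ((d : ℤ) * Nat.gcdA d N + (N : ℤ) * Nat.gcdB d N) := by
          rw [← hbez]
      _ = su ^ ((d : ℤ) * Nat.gcdA d N) * (su ^ (N : ℤ)) ^ (Nat.gcdB d N) := by
          rw [zpow_add, zpow_mul su (N : ℤ) (Nat.gcdB d N)]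
      _ = su ^ (Nat.gcdA d N * (d : ℤ)) := by rw [hsN, one_zpow, mul_one, mul_comm]
  refine ⟨((su ^ Nat.gcdA d N : Kˣ) : K), Units.ne_zero _, ?_⟩
  have h2 : (su ^ Nat.gcdA d N) ^ d = su * su := by
    have := key.symm
    rwa [zpow_natCast, show (2 : ℤ) = ((2 : ℕ) : ℤ) by norm_num, zpow_natCast, pow_two] at this
  calc ((su ^ Nat.gcdA d N : Kˣ) : K) ^ d = (((su ^ Nat.gcdA d N) ^ d : Kˣ) : K) := by
        rw [Units.val_pow_eq_pow_val]
    _ = ((su * su : Kˣ) : K) := by rw [h2]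
    _ = s * s := by rw [Units.val_mul, hsu]; rfl

lemma nonsq_div_sq {a b : K} (ha : a ≠ 0) (hb : b ≠ 0)
    (hna : ¬ IsSquare a) (hnb : ¬ IsSquare b) : ∃ s : K, s ≠ 0 ∧ s * s = a * b⁻¹ := by
  obtain ⟨g₀, hg₀⟩ := IsCyclic.exists_generator (α := Kˣ)
  obtain ⟨i, hi⟩ := Subgroup.mem_zpowers_iff.mp (hg₀ (Units.mk0 a ha))
  obtain ⟨j, hj⟩ := Subgroup.mem_zpowers_iff.mp (hg₀ (Units.mk0 b hb))
  have hodd : ∀ (x : K) (hx : x ≠ 0) (k : ℤ), g₀ ^ k = Units.mk0 x hx → ¬ IsSquare x → Odd k := by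
    intro x hx k hk hns
    rcases Int.even_or_odd k with ⟨t, ht⟩ | h
    · exfalso
      apply hns
      refine ⟨((g₀ ^ t : Kˣ) : K), ?_⟩
      have hsplit : g₀ ^ k = g₀ ^ t * g₀ ^ t := by rw [← zpow_add, ← ht]
      calc x = ((Units.mk0 x hx : Kˣ) : K) := rfl
        _ = ((g₀ ^ k : Kˣ) : K) := by rw [hk]
        _ = ((g₀ ^ t : Kˣ) : K) * ((g₀ ^ t : Kˣ) : K) := by rw [hsplit, Units.val_mul]
    · exact h
  have hio := hodd a ha i hi hna
  have hjo := hodd b hb j hj hnb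
  obtain ⟨t, ht⟩ := hio.sub_odd hjo
  refine ⟨((g₀ ^ t : Kˣ) : K), Units.ne_zero _, ?_⟩
  have hu : (g₀ ^ t) * (g₀ ^ t) = Units.mk0 a ha * (Units.mk0 b hb)⁻¹ := by
    rw [← zpow_add, ← ht, zpow_sub, hi, hj]
  calc ((g₀ ^ t : Kˣ) : K) * ((g₀ ^ t : Kˣ) : K)
      = ((g₀ ^ t * g₀ ^ t : Kˣ) : K) := (Units.val_mul _ _).symm
    _ = ((Units.mk0 a ha * (Units.mk0 b hb)⁻¹ : Kˣ) : K) := by rw [hu]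
    _ = a * b⁻¹ := by rw [Units.val_mul, Units.val_inv_eq_inv_val]; rfl

end NT

lemma not_sq_of_norm_not_sq {K : Type} [Field K] [Fintype K] (q : ℕ)
    (hcard : Fintype.card K = q ^ 2) (θ : K)
    (h : ¬ ∃ s : K, s ^ q = s ∧ s ^ 2 = θ ^ (q + 1)) : ¬ IsSquare θ := by
  rintro ⟨y, hy⟩
  apply h
  refine ⟨y ^ (q + 1), ?_, ?_⟩
  · have hyc : y ^ (q ^ 2) = y := by rw [← hcard]; exact FiniteField.pow_card y
    rw [← pow_mul, show (q + 1) * q = q ^ 2 + q by ring, pow_add, hyc, ← pow_succ']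
  · rw [hy, ← pow_mul]
    have h2 : (y * y) ^ (q + 1) = y ^ ((q + 1) * 2) := by
      rw [← pow_two, ← pow_mul, Nat.mul_comm 2 (q + 1)]
    rw [h2]

/-- Proposition 3.3.  For the planar power map `f(x) = x^d` on
`K = F_{q²}`: (i) each `γ_{c,σ}` (`c ≠ 0`, `σ` a field automorphism) maps the line
`L_{a,b}` onto `L_{σ(ca),σ(c^d b)}`, is a collineation of `Π(x^d)` fixing `(∞)`,
and these maps are closed under composition (they form a group); (ii) any two
unitals `U_θ`, `U_θ′` with `θ^{q+1}`, `θ′^{q+1}` nonsquares in `F` are mapped onto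
each other by some `γ_{c,σ}`, i.e. all such unitals are equivalent in `Π(x^d)`. -/
theorem stmt11 (p n q : ℕ) (hp : Nat.Prime p) (hpodd : Odd p) (hn : 0 < n) (hq : q = p ^ n)
    (K : Type) [Field K] [Fintype K] (hcard : Fintype.card K = q ^ 2)
    (d : ℕ) (hd : 0 < d)
    (hplanar : ∀ a : K, a ≠ 0 →
      Function.Bijective (fun x : K => (x + a) ^ d - x ^ d)) :
    (∀ c : K, c ≠ 0 → ∀ σ : K ≃+* K,
      (∀ a b : K,
        gammaMap K d c σ '' affLine K (fun x : K => x ^ d) a b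
          = affLine K (fun x : K => x ^ d) (σ (c * a)) (σ (c ^ d * b))) ∧
      Function.Bijective (gammaMap K d c σ) ∧
      (∀ L ∈ shiftLines K (fun x : K => x ^ d),
        gammaMap K d c σ '' L ∈ shiftLines K (fun x : K => x ^ d)) ∧
      gammaMap K d c σ (Sum.inr (Sum.inr ())) = Sum.inr (Sum.inr ())) ∧
    (∀ c c' : K, c ≠ 0 → c' ≠ 0 → ∀ σ σ' : K ≃+* K,
      ∃ (c'' : K) (σ'' : K ≃+* K), c'' ≠ 0 ∧
        gammaMap K d c σ ∘ gammaMap K d c' σ' = gammaMap K d c'' σ'') ∧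
    (∀ θ θ' : K, θ ≠ 0 → θ' ≠ 0 →
      (¬ ∃ s : K, s ^ q = s ∧ s ^ 2 = θ ^ (q + 1)) →
      (¬ ∃ s : K, s ^ q = s ∧ s ^ 2 = θ' ^ (q + 1)) →
      ∃ (c : K) (σ : K ≃+* K), c ≠ 0 ∧
        gammaMap K d c σ '' unitalSet K q θ = unitalSet K q θ') := by
  have hqodd : Odd q := by rw [hq]; exact hpodd.pow
  have hQodd : Odd (Fintype.card K) := by rw [hcard]; exact hqodd.pow
  have hp3 : 3 ≤ p := by
    rcases hpodd with ⟨k, hk⟩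
    have := hp.two_le
    omega
  have hq3 : 3 ≤ q := by
    have := Nat.le_self_pow hn.ne' p
    omega
  have hQ3 : 3 ≤ Fintype.card K := by rw [hcard]; nlinarith
  refine ⟨?_, ?_, ?_⟩
  · intro c hc σ
    refine ⟨fun a b => gamma_affLine d c hc σ a b, gamma_bij d c hc σ, ?_, rfl⟩
    intro L hL
    rcases hL with ⟨a, b, rfl⟩ | ⟨a, rfl⟩ | rfl
    · exact Or.inl ⟨σ (c * a), σ (c ^ d * b), gamma_affLine d c hc σ a b⟩
    · exact Or.inr (Or.inl ⟨σ (c * a), gamma_vertLine d c hc σ a⟩)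
    · exact Or.inr (Or.inr (gamma_lineAtInf d c hc σ))
  · intro c c' hc hc' σ σ'
    have hs0 : σ'.symm c ≠ 0 := fun h => hc (by
      have h2 := congrArg σ' h
      rwa [RingEquiv.apply_symm_apply, map_zero] at h2)
    exact ⟨σ'.symm c * c', σ'.trans σ, mul_ne_zero hs0 hc', gamma_comp d c c' σ σ'⟩
  · intro θ θ' hθ hθ' hns hns'
    have hg2 : Nat.gcd d (Fintype.card K - 1) = 2 :=
      planar_gcd_two d hd hQodd hQ3 hplanar
    have hnsθ : ¬ IsSquare θ := not_sq_of_norm_not_sq q hcard θ hns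
    have hnsθ' : ¬ IsSquare θ' := not_sq_of_norm_not_sq q hcard θ' hns'
    obtain ⟨s, hs0, hs⟩ := nonsq_div_sq hθ' hθ hnsθ' hnsθ
    obtain ⟨c, hc0, hcd⟩ := sq_is_dpow d hg2 s hs0
    have hke : c ^ d * θ = θ' := by
      rw [hcd, hs]
      exact inv_mul_cancel_right₀ hθ θ'
    refine ⟨c, RingEquiv.refl K, hc0, ?_⟩
    rw [gamma_unital d q c θ hc0, hke]
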